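/- Let f = (g_2 + g_1 + g_0, h_1 + h_0) : C^2 -> C^2 where g_i, h_i are homogeneous of degree i, g_2 ≠ 0 is not a square of a linear form, and the linear form h_1 ≠ 0 does not divide g_2. Then f is linearly equivalent to (x,y) |-> (xy, x+y): there exist affine automorphisms L, R of C^2 with f = L ∘ (xy, x+y) ∘ R. -/

import Mathlib

/-- An affine automorphism of `ℂ²`. -/
structure Aff where
  m11 : ℂ
  m12 : ℂ
  m21 : ℂ
  m22 : ℂ
  t1 : ℂ
  t2 : ℂ
  inv : m11 * m22 - m12 * m21 ≠ 0

/-- The underlying map of an affine automorphism. -/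
def Aff.toFun (A : Aff) (p : ℂ × ℂ) : ℂ × ℂ :=
  (A.m11 * p.1 + A.m12 * p.2 + A.t1, A.m21 * p.1 + A.m22 * p.2 + A.t2)

/-- Let `f = (g₂ + g₁ + g₀, h₁ + h₀)` with `g₂ ≠ 0` not a square of a linear form and the
nonzero linear form `h₁` not dividing `g₂`. Then `f` is linearly equivalent to `(xy, x+y)`. -/
theorem stmt_14 (a b c p1 p2 g0 d e h0 : ℂ)
    (hg2 : ¬ (a = 0 ∧ b = 0 ∧ c = 0))
    (hnsq : ¬ ∃ s t : ℂ, ∀ x y : ℂ, a * x ^ 2 + b * x * y + c * y ^ 2 = (s * x + t * y) ^ 2)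
    (hh1 : ¬ (d = 0 ∧ e = 0))
    (hndvd : ¬ ∃ s t : ℂ, ∀ x y : ℂ,
        a * x ^ 2 + b * x * y + c * y ^ 2 = (d * x + e * y) * (s * x + t * y)) :
    ∃ L R : Aff, ∀ q : ℂ × ℂ,
      (a * q.1 ^ 2 + b * q.1 * q.2 + c * q.2 ^ 2 + p1 * q.1 + p2 * q.2 + g0,
        d * q.1 + e * q.2 + h0)
      = L.toFun (((R.toFun q).1 * (R.toFun q).2, (R.toFun q).1 + (R.toFun q).2)) := by
  -- Step 1: the discriminant is nonzero.
  have hΔ : b ^ 2 - 4 * a * c ≠ 0 := by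
    intro h0'
    apply hnsq
    by_cases ha : a = 0
    · have hb : b = 0 := by
        have hb2 : b ^ 2 = 0 := by linear_combination h0' + 4 * c * ha
        exact pow_eq_zero_iff two_ne_zero |>.mp hb2
      obtain ⟨t, ht⟩ := IsAlgClosed.exists_pow_nat_eq c (n := 2) (by norm_num)
      exact ⟨0, t, fun x y => by linear_combination x ^ 2 * ha + x * y * hb - y ^ 2 * ht⟩
    · obtain ⟨s, hs⟩ := IsAlgClosed.exists_pow_nat_eq a (n := 2) (by norm_num)
      have hs0 : s ≠ 0 := by intro h; apply ha; rw [← hs, h]; ring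
      refine ⟨s, b / (2 * s), fun x y => ?_⟩
      field_simp
      linear_combination (-4 * s ^ 2 * x ^ 2 + 4 * c * y ^ 2) * hs + (-y ^ 2) * h0'
  -- Step 2: factor the quadratic form into two independent linear forms.
  obtain ⟨α1, β1, α2, β2, hA, hB, hC, hD⟩ :
      ∃ α1 β1 α2 β2 : ℂ, α1 * α2 = a ∧ α1 * β2 + α2 * β1 = b ∧ β1 * β2 = c ∧
        α1 * β2 - α2 * β1 ≠ 0 := by
    by_cases ha : a = 0
    · have hb : b ≠ 0 := by
        intro hb; apply hΔ; rw [ha, hb]; ring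
      exact ⟨0, 1, b, c, by rw [ha]; ring, by ring, by ring, by simpa using hb⟩
    · obtain ⟨δ, hδ⟩ := IsAlgClosed.exists_pow_nat_eq (b ^ 2 - 4 * a * c) (n := 2)
        (by norm_num)
      have hδ0 : δ ≠ 0 := fun h => hΔ (by rw [← hδ, h]; ring)
      refine ⟨1, (b - δ) / (2 * a), a, (b + δ) / 2, by ring, ?_, ?_, ?_⟩
      · field_simp; ring
      · field_simp; linear_combination -hδ
      · have h : (1 : ℂ) * ((b + δ) / 2) - a * ((b - δ) / (2 * a)) = δ := by
          field_simp; ring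
        rw [h]; exact hδ0
  -- Step 3: coordinates of h₁ and g₁ in the basis of the two linear forms.
  obtain ⟨p, q, hd, he⟩ : ∃ p q : ℂ, d = p * α1 + q * α2 ∧ e = p * β1 + q * β2 := by
    refine ⟨(d * β2 - e * α2) / (α1 * β2 - α2 * β1),
      (e * α1 - d * β1) / (α1 * β2 - α2 * β1), ?_, ?_⟩ <;>
    · rw [div_mul_eq_mul_div, div_mul_eq_mul_div, ← add_div, eq_div_iff hD]
      ring
  obtain ⟨r, w, hr, hw⟩ : ∃ r w : ℂ, p1 = r * α1 + w * α2 ∧ p2 = r * β1 + w * β2 := by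
    refine ⟨(p1 * β2 - p2 * α2) / (α1 * β2 - α2 * β1),
      (p2 * α1 - p1 * β1) / (α1 * β2 - α2 * β1), ?_, ?_⟩ <;>
    · rw [div_mul_eq_mul_div, div_mul_eq_mul_div, ← add_div, eq_div_iff hD]
      ring
  have hp : p ≠ 0 := by
    intro hp0
    have hq0 : q ≠ 0 := by
      intro hq0; exact hh1 ⟨by rw [hd, hp0, hq0]; ring, by rw [he, hp0, hq0]; ring⟩
    apply hndvd
    refine ⟨α1 / q, β1 / q, fun x y => ?_⟩
    have hd' : d = q * α2 := by rw [hd, hp0]; ring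
    have he' : e = q * β2 := by rw [he, hp0]; ring
    rw [hd', he']
    field_simp
    linear_combination (-(x ^ 2)) * hA + (-(x * y)) * hB + (-(y ^ 2)) * hC
  have hq : q ≠ 0 := by
    intro hq0
    apply hndvd
    refine ⟨α2 / p, β2 / p, fun x y => ?_⟩
    have hd' : d = p * α1 := by rw [hd, hq0]; ring
    have he' : e = p * β1 := by rw [he, hq0]; ring
    rw [hd', he']
    field_simp
    linear_combination (-(x ^ 2)) * hA + (-(x * y)) * hB + (-(y ^ 2)) * hC
  -- Step 4: square root normalization and inverses.
  obtain ⟨σ, hσ2⟩ := IsAlgClosed.exists_pow_nat_eq (p * q) (n := 2) (by norm_num)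
  have hσ0 : σ ≠ 0 := by
    intro h
    exact mul_ne_zero hp hq (by rw [← hσ2, h]; ring)
  obtain ⟨τ, hστ⟩ : ∃ τ : ℂ, σ * τ = 1 := ⟨σ⁻¹, mul_inv_cancel₀ hσ0⟩
  obtain ⟨pi, hppi⟩ : ∃ pi : ℂ, p * pi = 1 := ⟨p⁻¹, mul_inv_cancel₀ hp⟩
  obtain ⟨qi, hqqi⟩ : ∃ qi : ℂ, q * qi = 1 := ⟨q⁻¹, mul_inv_cancel₀ hq⟩
  have h1 : τ ^ 2 * (p * q) = 1 := by
    linear_combination (-(τ ^ 2)) * hσ2 + (σ * τ + 1) * hστ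
  have h2 : σ * τ * (p * pi) = 1 := by
    linear_combination (p * pi) * hστ + hppi
  have h3 : σ * τ * (q * qi) = 1 := by
    linear_combination (q * qi) * hστ + hqqi
  have h4 : σ ^ 2 * (pi * qi) = 1 := by
    linear_combination (pi * qi) * hσ2 + (q * qi) * hppi + hqqi
  -- Step 5: the affine maps.
  refine ⟨⟨1, 0, 0, σ, g0 - r * w, h0 - σ * (w * σ * qi + r * σ * pi), by simpa using hσ0⟩,
    ⟨τ * p * α1, τ * p * β1, τ * q * α2, τ * q * β2, w * σ * qi, r * σ * pi, ?_⟩, ?_⟩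
  · intro hcon
    apply hD
    linear_combination hcon - (α1 * β2 - α2 * β1) * h1
  · rintro ⟨x, y⟩
    simp only [Aff.toFun]
    refine Prod.ext ?_ ?_
    · show a * x ^ 2 + b * x * y + c * y ^ 2 + p1 * x + p2 * y + g0 = _
      linear_combination (-(x ^ 2)) * hA + (-(x * y)) * hB + (-(y ^ 2)) * hC
        + x * hr + y * hw
        + (-(α1 * α2 * x ^ 2 + (α1 * β2 + α2 * β1) * x * y + β1 * β2 * y ^ 2)) * h1
        + (-(r * α1 * x + r * β1 * y)) * h2
        + (-(w * α2 * x + w * β2 * y)) * h3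
        + (-(r * w)) * h4
    · show d * x + e * y + h0 = _
      linear_combination x * hd + y * he
        + (-((p * α1 + q * α2) * x + (p * β1 + q * β2) * y)) * hστ
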